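/- If the NFA A has a transition out of every state leading eventually to an accepting state, and w[i..j] ∈ L(A) with j − i + 1 ≤ N, then in the run of the non-buffer part of M_{A,N} over w, at step j the subset 𝒮_j contains a pair (s, ((j−i) mod N)+1) with s ∈ SF. -/
import Mathlib


attribute [local instance] Classical.propDecidable

/-- A nondeterministic finite automaton with a single initial state. -/
structure NFA' (α : Type) (σ : Type) where
  start : σ
  accept : Set σ
  step : σ → α → σ → Prop

namespace NFA'
variable {α σ : Type}

def stepSet (A : NFA' α σ) (S : Set σ) (a : α) : Set σ := {s' | ∃ s ∈ S, A.step s a s'}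

/-- States reachable from a set of states by reading a word. -/
def evalFrom (A : NFA' α σ) (S : Set σ) (u : List α) : Set σ := u.foldl A.stepSet S

/-- States reachable from the initial state by reading a word. -/
def eval (A : NFA' α σ) (u : List α) : Set σ := A.evalFrom {A.start} u

/-- The NFA accepts the word `u`. -/
def accepts (A : NFA' α σ) (u : List α) : Prop := ∃ s ∈ A.eval u, s ∈ A.accept

end NFA'

/-- `sub w i j` is the subword `w[i..j]` (1-indexed, inclusive). -/
def sub {β : Type} (w : List β) (i j : ℕ) : List β := (w.drop (i - 1)).take (j - i + 1)

/-- A Moore machine. -/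
structure Moore (I O Q : Type) where
  init : Q
  trans : Q → I → Q
  out : Q → O

/-- The output word of a Moore machine over an input word:
`Λ(q₀) Λ(q₁) … Λ(q_{m-1})` where `q₀ q₁ … q_m` is the run. -/
def Moore.output {I O Q : Type} (M : Moore I O Q) (u : List I) : List O :=
  (List.range u.length).map fun k => M.out ((u.take k).foldl M.trans M.init)

/-- The input word `w` padded with `N` copies of `⊥` at the end. -/
def pad {α : Type} (w : List α) (N : ℕ) : List (Option α) :=
  w.map some ++ List.replicate N none

/-- One step of the non-buffer part of `M_{A,N}` (subset construction with
counters incrementing from `n` to `(n mod N)+1`; no transitions on `⊥`). -/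
def nbStep {α σ : Type} (A : NFA' α σ) (N : ℕ) (S : Set (σ × ℕ)) (a : Option α) :
    Set (σ × ℕ) :=
  insert (A.start, 0)
    {p | ∃ s n a', (s, n) ∈ S ∧ a = some a' ∧ A.step s a' p.1 ∧ p.2 = n % N + 1}

lemma start_mem_foldl {α σ : Type} (A : NFA' α σ) (N : ℕ) :
    ∀ (u : List (Option α)) (S : Set (σ × ℕ)), (A.start, 0) ∈ S →
      (A.start, 0) ∈ u.foldl (nbStep A N) S := by
  intro u
  induction u with
  | nil => intro S hS; exact hS
  | cons a v ih =>
      intro S hS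
      exact ih _ (Set.mem_insert _ _)

lemma sim_foldl {α σ : Type} (A : NFA' α σ) (N : ℕ) :
    ∀ (u : List α) (T : Set σ) (S : Set (σ × ℕ)) (n : ℕ),
      (∀ s ∈ T, (s, n) ∈ S) → n + u.length ≤ N →
      ∀ s' ∈ A.evalFrom T u,
        (s', n + u.length) ∈ (u.map some).foldl (nbStep A N) S := by
  intro u
  induction u with
  | nil => intro T S n hTS _ s' hs'; simpa using hTS s' hs'
  | cons a v ih =>
      intro T S n hTS hle s' hs'
      have hnN : n < N := by simp at hle; omega
      have hstep : ∀ s'' ∈ A.stepSet T a, (s'', n + 1) ∈ nbStep A N S (some a) := by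
        intro s'' hs''
        obtain ⟨s, hsT, hst⟩ := hs''
        refine Set.mem_insert_iff.mpr (Or.inr ⟨s, n, a, hTS s hsT, rfl, hst, ?_⟩)
        simp [Nat.mod_eq_of_lt hnN]
      have := ih (A.stepSet T a) (nbStep A N S (some a)) (n + 1) hstep
        (by simp at hle ⊢; omega) s' hs'
      simpa [Nat.add_assoc, Nat.add_comm 1 v.length] using this

/-- if `w[i..j] ∈ L(A)` (1-indexed) with `j - i + 1 ≤ N`, then in
the run of the non-buffer part of `M_{A,N}` over `w`, the subset `𝒮_j` contains
a pair `(s, ((j-i) mod N) + 1)` with `s` accepting. -/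
theorem accepting_pair_in_subset {α σ : Type} (A : NFA' α σ) (N : ℕ) (hN : 1 ≤ N)
    (w : List α) (i j : ℕ) (hi : 1 ≤ i) (hij : i ≤ j) (hj : j ≤ w.length)
    (hacc : A.accepts (sub w i j)) (hlen : j - i + 1 ≤ N) :
    ∃ s ∈ A.accept,
      (s, (j - i) % N + 1) ∈ ((w.take j).map some).foldl (nbStep A N) {(A.start, 0)} := by
  obtain ⟨s, hs_eval, hs_acc⟩ := hacc
  refine ⟨s, hs_acc, ?_⟩
  have hsub : sub w i j = (w.drop (i - 1)).take (j - (i - 1)) := by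
    unfold sub; congr 1; omega
  have hsplit : w.take j = w.take (i - 1) ++ sub w i j := by
    rw [hsub, ← List.take_add]
    congr 1; omega
  have hsublen : (sub w i j).length = j - i + 1 := by
    rw [hsub]; simp; omega
  have hjiN : j - i < N := by omega
  rw [hsplit, List.map_append, List.foldl_append]
  have hstart := start_mem_foldl A N ((w.take (i - 1)).map some) {(A.start, 0)} rfl
  have := sim_foldl A N (sub w i j) {A.start}
    (((w.take (i - 1)).map some).foldl (nbStep A N) {(A.start, 0)}) 0
    (by rintro s' rfl; exact hstart) (by omega) s hs_eval
  rw [hsublen] at this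
  simpa [Nat.mod_eq_of_lt hjiN] using this
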